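/- Let λ > 0, q > 0 with 0 < q < 2λ, let ρ and ρ_c be real numbers, and set f = -K(ρ - ρ_c). Then there exists K ∈ (0, 2) such that max{-q, q - 2λ} ≤ f ≤ q, i.e., such that the control equation sin θ = (-f² - 2λf + q²)/(2λq) has a solution θ. -/

import Mathlib

/-- For 0 < q < 2λ, there exists a gain K ∈ (0,2) such that
f = -K(ρ - ρ_c) satisfies max{-q, q-2λ} ≤ f ≤ q, so the control equation
sin θ = (-f² - 2λf + q²)/(2λq) has a solution θ. -/
theorem stmt3 (lam q ρ ρc : ℝ) (hlam : 0 < lam) (hq : 0 < q) (hq2 : q < 2 * lam) :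
    ∃ K : ℝ, K ∈ Set.Ioo (0 : ℝ) 2 ∧
      max (-q) (q - 2 * lam) ≤ -K * (ρ - ρc) ∧ -K * (ρ - ρc) ≤ q ∧
      ∃ θ : ℝ, Real.sin θ =
        (-(-K * (ρ - ρc)) ^ 2 - 2 * lam * (-K * (ρ - ρc)) + q ^ 2) / (2 * lam * q) := by
  set m : ℝ := min q (2 * lam - q) with hm
  have hm0 : 0 < m := lt_min hq (by linarith)
  set d : ℝ := ρ - ρc with hd
  by_cases hdz : d = 0
  · refine ⟨1, ⟨one_pos, one_lt_two⟩, ?_, ?_, ?_⟩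
    · rw [hdz]; simp; constructor <;> linarith
    · rw [hdz]; simp; linarith
    · refine ⟨Real.arcsin ((-(-1 * d) ^ 2 - 2 * lam * (-1 * d) + q ^ 2) / (2 * lam * q)), ?_⟩
      rw [Real.sin_arcsin]
      · rw [hdz, le_div_iff₀ (by positivity : (0:ℝ) < 2 * lam * q)]
        nlinarith
      · rw [hdz, div_le_one (by positivity : (0:ℝ) < 2 * lam * q)]
        nlinarith
  · have habs : 0 < |d| := abs_pos.2 hdz
    set K : ℝ := min 1 (m / (2 * |d|)) with hK
    have hK0 : 0 < K := lt_min one_pos (by positivity)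
    have hK1 : K ≤ 1 := min_le_left _ _
    have hKd : K * |d| ≤ m / 2 := by
      have h2 : K ≤ m / (2 * |d|) := min_le_right _ _
      calc K * |d| ≤ (m / (2 * |d|)) * |d| := by
            exact mul_le_mul_of_nonneg_right h2 (le_of_lt habs)
        _ = m / 2 := by field_simp
    have hf : |(-K * d)| ≤ m := by
      rw [abs_mul, abs_neg, abs_of_pos hK0]
      linarith
    have hf1 : -m ≤ -K * d := (abs_le.1 hf).1
    have hf2 : -K * d ≤ m := (abs_le.1 hf).2
    have hmq : m ≤ q := min_le_left _ _
    have hm2 : m ≤ 2 * lam - q := min_le_right _ _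
    refine ⟨K, ⟨hK0, by linarith⟩, ?_, by linarith, ?_⟩
    · apply max_le <;> linarith
    · set f : ℝ := -K * d with hfd
      have h1 : f ≤ q := by linarith
      have h2 : -q ≤ f := by linarith
      have h3 : q - 2 * lam ≤ f := by linarith
      refine ⟨Real.arcsin ((-f ^ 2 - 2 * lam * f + q ^ 2) / (2 * lam * q)), ?_⟩
      rw [Real.sin_arcsin]
      · rw [le_div_iff₀ (by positivity : (0:ℝ) < 2 * lam * q)]
        nlinarith [sq_nonneg (f + lam + q), mul_nonneg (sub_nonneg.2 h2) (sub_nonneg.2 h1)]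
      · rw [div_le_one (by positivity : (0:ℝ) < 2 * lam * q)]
        nlinarith [sq_nonneg (f + lam - q), sq_nonneg (f + lam + q - 2*lam)]
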